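/- arXiv:2406.17524 — 6 statements merged into one kernel-verified Lean document; each statement's English description precedes it below -/
import Mathlib

section
/- For all real numbers v and z, |vz + z − v − 2| ≤ max{|v² − 2|, |z² − 2|, |vz + 2z − 2v − 2|}. -/
/-- For all real `v`, `z`,
`|vz + z − v − 2| ≤ max {|v² − 2|, |z² − 2|, |vz + 2z − 2v − 2|}`. -/
theorem stmt_8 (v z : ℝ) :
    |v * z + z - v - 2| ≤
      max |v ^ 2 - 2| (max |z ^ 2 - 2| |v * z + 2 * z - 2 * v - 2|) := by
  set m := max |v ^ 2 - 2| (max |z ^ 2 - 2| |v * z + 2 * z - 2 * v - 2|) with hm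
  have h1 : |v ^ 2 - 2| ≤ m := le_max_left _ _
  have h2 : |z ^ 2 - 2| ≤ m := le_trans (le_max_left _ _) (le_max_right _ _)
  have h3 : |v * z + 2 * z - 2 * v - 2| ≤ m :=
    le_trans (le_max_right _ _) (le_max_right _ _)
  rw [abs_le] at h1 h2 h3 ⊢
  obtain ⟨h1a, h1b⟩ := h1
  obtain ⟨h2a, h2b⟩ := h2
  obtain ⟨h3a, h3b⟩ := h3
  constructor
  · -- lower bound: -m ≤ F₄
    rcases le_total z v with hzv | hvz
    · -- F₄ = F₃ + (v - z) ≥ F₃ ≥ -m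
      linarith
    · rcases le_total z 1 with hz1 | h1z
      · -- F₄ - F₂ = (v - z)(z - 1) ≥ 0
        nlinarith [mul_nonneg (sub_nonneg.2 hvz) (sub_nonneg.2 hz1)]
      · rcases le_total v (-1) with hv1 | h1v
        · -- hard region: v ≤ -1, z ≥ 1; set a = -1 - v ≥ 0, b = z - 1 ≥ 0
          have ha : (0:ℝ) ≤ -1 - v := by linarith
          have hb : (0:ℝ) ≤ z - 1 := by linarith
          rcases le_total (z - v - 2) (2 * ((-1 - v) * (z - 1))) with hc | hc
          · -- a + b ≤ 2ab
            rcases le_total (z - v - 2) 2 with hab2 | hab2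
            · -- also a + b ≤ 2 : contradiction-style, squeeze
              nlinarith [sq_nonneg (v + z), mul_nonneg (add_nonneg ha hb)
                (by linarith : (0:ℝ) ≤ 2 - (z - v - 2)), mul_nonneg ha hb]
            · -- a + b ≥ 2 : use h1b + h2b
              nlinarith [sq_nonneg (v + z), mul_nonneg ha hb]
          · -- a + b ≥ 2ab : use h3b, linear in atoms
            nlinarith [mul_nonneg ha hb]
        · -- F₄ - F₁ = (z - v)(v + 1) ≥ 0
          nlinarith [mul_nonneg (sub_nonneg.2 hvz) (by linarith : (0:ℝ) ≤ v + 1)]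
  · -- upper bound: F₄ ≤ m
    rcases le_total v z with hvz | hzv
    · -- F₄ = F₃ + (v - z) ≤ F₃ ≤ m
      linarith
    · rcases le_total z 1 with hz1 | h1z
      · -- F₄ - F₂ = (v - z)(z - 1) ≤ 0
        nlinarith [mul_nonneg (sub_nonneg.2 hzv) (sub_nonneg.2 hz1)]
      · -- z ≥ 1 and v ≥ z ≥ 1 so v + 1 ≥ 0; F₄ - F₁ = (z - v)(v + 1) ≤ 0
        nlinarith [mul_nonneg (sub_nonneg.2 hzv) (by linarith : (0:ℝ) ≤ v + 1)]
end

section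
/- Let C and D be 2×2 complex matrices with tr(C) = tr(D) and det(C) = det(D) = 1, and suppose that the numbers (tr C)² and tr(CD) are real. Then ρ(CCCD) ≤ max{ρ(CCCC), ρ(CDCD), ρ(CCDD)}, where ρ denotes the spectral radius. -/
open Matrix

/-! ### Auxiliary real inequality -/

lemma stmt14_realineq (u z : ℝ) :
    |(u-1)*z-u| ≤ max (|u^2-4*u+2|) (max (|z^2-2|) (|u*z-2*u+2|)) := by
  by_contra h
  push_neg at h
  simp only [max_lt_iff] at h
  obtain ⟨h1, h2, h3⟩ := h
  rw [abs_lt] at h1 h2 h3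
  obtain ⟨a1, a2⟩ := h1
  obtain ⟨b1, b2⟩ := h2
  obtain ⟨c1, c2⟩ := h3
  rcases abs_cases ((u-1)*z-u) with ⟨hA, _⟩ | ⟨hA, _⟩ <;> rw [hA] at a1 a2 b1 b2 c1 c2
  · nlinarith [mul_pos (sub_pos.2 b2) (sub_pos.2 c2), sq_nonneg (u-2-z), sq_nonneg (u+z),
      mul_pos (sub_pos.2 a2) (sub_pos.2 c2)]
  · nlinarith [sq_nonneg (u-2-z), sq_nonneg (u+z-2), sq_nonneg (z-1), sq_nonneg (u-1),
      mul_pos (sub_pos.2 a1) (sub_pos.2 c1)]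

/-! ### Roots of `X² - aX + 1` with `a` real -/

lemma stmt14_quad_root_cases (a : ℝ) (l : ℂ) (h : l ^ 2 - (a : ℂ) * l + 1 = 0) :
    ‖l‖ = 1 ∨ ∃ x : ℝ, l = (x : ℂ) ∧ x ≠ 0 ∧ a = x + x⁻¹ := by
  have hre : l.re ^ 2 - l.im ^ 2 - a * l.re + 1 = 0 := by
    have := congrArg Complex.re h
    simp [Complex.add_re, Complex.sub_re, Complex.mul_re, pow_two] at this
    nlinarith [this]
  have him : l.im * (2 * l.re - a) = 0 := by
    have := congrArg Complex.im h
    simp [Complex.add_im, Complex.sub_im, Complex.mul_im, pow_two] at this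
    nlinarith [this]
  rcases mul_eq_zero.mp him with h0 | h0
  · right
    have hl : l = (l.re : ℂ) := by
      apply Complex.ext <;> simp [h0]
    refine ⟨l.re, hl, ?_, ?_⟩
    · intro hc
      rw [hc] at hre
      nlinarith [hre]
    · have hne : l.re ≠ 0 := by
        intro hc
        rw [hc] at hre; nlinarith [hre]
      field_simp
      nlinarith [hre]
  · left
    have ha : a = 2 * l.re := by linarith
    rw [ha] at hre
    have h1 : l.re ^ 2 + l.im ^ 2 = 1 := by nlinarith [hre]
    have h2 := Complex.sq_norm l
    rw [Complex.normSq_apply] at h2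
    nlinarith [norm_nonneg l, h2, h1]

lemma stmt14_abs_add_inv (x : ℝ) (hx : x ≠ 0) : |x + x⁻¹| = |x| + |x|⁻¹ := by
  rcases hx.lt_or_gt with h | h
  · have h1 : x⁻¹ < 0 := inv_neg''.2 h
    rw [abs_of_neg (by linarith), abs_of_neg h, inv_neg]
    ring
  · have h1 : 0 < x⁻¹ := inv_pos.2 h
    rw [abs_of_pos (by linarith), abs_of_pos h]

lemma stmt14_key_compare (a b : ℝ) (l m : ℂ) (hl : l ^ 2 - (a : ℂ) * l + 1 = 0)
    (hm : m ^ 2 - (b : ℂ) * m + 1 = 0) (hab : |a| ≤ |b|) :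
    ‖l‖ ≤ max ‖m‖ ‖m‖⁻¹ := by
  have hm0 : m ≠ 0 := by rintro rfl; simp at hm
  have hM0 : 0 < ‖m‖ := by simpa using hm0
  have hmax1 : 1 ≤ max ‖m‖ ‖m‖⁻¹ := by
    rcases le_or_gt 1 ‖m‖ with h | h
    · exact le_max_of_le_left h
    · exact le_max_of_le_right (one_le_inv_iff₀.2 ⟨hM0, h.le⟩)
  rcases stmt14_quad_root_cases a l hl with h1 | ⟨x, rfl, hx0, hax⟩
  · rw [h1]; exact hmax1
  rw [Complex.norm_real, Real.norm_eq_abs]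
  rcases le_or_gt |x| 1 with hx1 | hx1
  · exact hx1.trans hmax1
  have hsx : 0 < |x| := abs_pos.2 hx0
  have hsc : |x| * |x|⁻¹ = 1 := mul_inv_cancel₀ hsx.ne'
  have ha2 : 2 < |a| := by
    rw [hax, stmt14_abs_add_inv x hx0]
    nlinarith [mul_pos (sub_pos.2 hx1) (sub_pos.2 hx1), hsc, inv_pos.2 hsx]
  have hb2 : 2 < |b| := lt_of_lt_of_le ha2 hab
  rcases stmt14_quad_root_cases b m hm with h2 | ⟨y, rfl, hy0, hby⟩
  · exfalso
    have h' : (b : ℂ) * m = m ^ 2 + 1 := by linear_combination -hm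
    have hb' : (b : ℂ) = m + m⁻¹ := by
      field_simp
      linear_combination h'
    have hble : |b| ≤ 2 := by
      calc |b| = ‖(b : ℂ)‖ := by rw [Complex.norm_real, Real.norm_eq_abs]
        _ = ‖m + m⁻¹‖ := by rw [hb']
        _ ≤ ‖m‖ + ‖m⁻¹‖ := norm_add_le _ _
        _ = 2 := by rw [norm_inv, h2]; norm_num
    linarith
  · rw [Complex.norm_real, Real.norm_eq_abs]
    rw [hby, stmt14_abs_add_inv y hy0] at hb2 hab
    rw [hax, stmt14_abs_add_inv x hx0] at hab
    by_contra hcon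
    push_neg at hcon
    simp only [max_lt_iff] at hcon
    obtain ⟨hc1, hc2⟩ := hcon
    have hy1 : 0 < |y| := abs_pos.2 hy0
    have htc : |y| * |y|⁻¹ = 1 := mul_inv_cancel₀ hy1.ne'
    have hxy : 1 < |x| * |y| := by nlinarith [hc2, hy1, htc]
    have hab2 : (|x| + |x|⁻¹) * (|x| * |y|) ≤ (|y| + |y|⁻¹) * (|x| * |y|) :=
      mul_le_mul_of_nonneg_right hab (le_of_lt (mul_pos hsx hy1))
    have e1 : |x|⁻¹ * (|x| * |y|) = |y| := by field_simp
    have e2 : |y|⁻¹ * (|x| * |y|) = |x| := by field_simp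
    nlinarith [hab2, e1, e2, mul_pos (sub_pos.2 hc1) (sub_pos.2 hxy)]

/-! ### Spectrum of a 2×2 complex matrix -/

lemma stmt14_spec_iff (M : Matrix (Fin 2) (Fin 2) ℂ) (x : ℂ) :
    x ∈ spectrum ℂ M ↔ x ^ 2 - M.trace * x + M.det = 0 := by
  rw [spectrum.mem_iff, Matrix.isUnit_iff_isUnit_det, isUnit_iff_ne_zero, not_ne_iff]
  have hdet : (algebraMap ℂ (Matrix (Fin 2) (Fin 2) ℂ) x - M).det
      = x ^ 2 - M.trace * x + M.det := by
    simp [Matrix.det_fin_two, Matrix.sub_apply, Matrix.algebraMap_matrix_apply,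
      Matrix.trace_fin_two]
    ring
  rw [hdet]

lemma stmt14_specrad_mono (M N : Matrix (Fin 2) (Fin 2) ℂ) (hM : M.det = 1) (hN : N.det = 1)
    (a b : ℝ) (hMa : M.trace = (a : ℂ)) (hNb : N.trace = (b : ℂ)) (hab : |a| ≤ |b|) :
    spectralRadius ℂ M ≤ spectralRadius ℂ N := by
  obtain ⟨s, hs⟩ := IsAlgClosed.exists_pow_nat_eq ((b : ℂ) ^ 2 - 4) (n := 2) (by norm_num)
  set μ : ℂ := ((b : ℂ) + s) / 2 with hμ
  have hroot : μ ^ 2 - (b : ℂ) * μ + 1 = 0 := by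
    rw [hμ]
    field_simp
    linear_combination hs
  have hμ0 : μ ≠ 0 := by
    intro h; rw [h] at hroot; simp at hroot
  have hinv : ((b : ℂ) - μ) * μ = 1 := by linear_combination -hroot
  have hμinv : μ⁻¹ = (b : ℂ) - μ := (eq_inv_of_mul_eq_one_left hinv).symm
  have hroot' : (μ⁻¹) ^ 2 - (b : ℂ) * μ⁻¹ + 1 = 0 := by
    rw [hμinv]
    linear_combination hroot
  have h1 : μ ∈ spectrum ℂ N := (stmt14_spec_iff N μ).2 (by rw [hNb, hN]; exact hroot)
  have h2 : μ⁻¹ ∈ spectrum ℂ N := (stmt14_spec_iff N μ⁻¹).2 (by rw [hNb, hN]; exact hroot')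
  rw [spectralRadius]
  refine iSup₂_le fun x hx => ?_
  have hxroot : x ^ 2 - (a : ℂ) * x + 1 = 0 := by
    have := (stmt14_spec_iff M x).1 hx
    rwa [hMa, hM] at this
  have hkey := stmt14_key_compare a b x μ hxroot hroot hab
  have h1' : (‖μ‖₊ : ENNReal) ≤ spectralRadius ℂ N :=
    le_iSup₂ (f := fun k _ => (‖k‖₊ : ENNReal)) μ h1
  have h2' : (‖μ⁻¹‖₊ : ENNReal) ≤ spectralRadius ℂ N :=
    le_iSup₂ (f := fun k _ => (‖k‖₊ : ENNReal)) μ⁻¹ h2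
  rcases le_max_iff.1 hkey with h | h
  · exact le_trans (by exact_mod_cast h) h1'
  · refine le_trans ?_ h2'
    have : ‖x‖ ≤ ‖μ⁻¹‖ := by rwa [norm_inv]
    exact_mod_cast this

/-! ### Trace identities for 2×2 matrices -/

lemma stmt14_tr1 (C D : Matrix (Fin 2) (Fin 2) ℂ) :
    (C * C * C * D).trace
      = (C.trace ^ 2 - C.det) * (C * D).trace - C.trace * C.det * D.trace := by
  simp [Matrix.trace_fin_two, Matrix.mul_apply, Fin.sum_univ_two, Matrix.det_fin_two]
  ring

lemma stmt14_tr2 (C : Matrix (Fin 2) (Fin 2) ℂ) :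
    (C * C * C * C).trace = C.trace ^ 4 - 4 * C.trace ^ 2 * C.det + 2 * C.det ^ 2 := by
  simp [Matrix.trace_fin_two, Matrix.mul_apply, Fin.sum_univ_two, Matrix.det_fin_two]
  ring

lemma stmt14_tr3 (C D : Matrix (Fin 2) (Fin 2) ℂ) :
    (C * D * C * D).trace = (C * D).trace ^ 2 - 2 * (C.det * D.det) := by
  simp [Matrix.trace_fin_two, Matrix.mul_apply, Fin.sum_univ_two, Matrix.det_fin_two]
  ring

lemma stmt14_tr4 (C D : Matrix (Fin 2) (Fin 2) ℂ) :
    (C * C * D * D).trace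
      = C.trace * D.trace * (C * D).trace - C.trace ^ 2 * D.det - D.trace ^ 2 * C.det
        + 2 * (C.det * D.det) := by
  simp [Matrix.trace_fin_two, Matrix.mul_apply, Fin.sum_univ_two, Matrix.det_fin_two]
  ring

/-- Let `C`, `D` be 2×2 complex matrices with `tr C = tr D` and
`det C = det D = 1`, such that `(tr C)²` and `tr (CD)` are real. Then
`ρ(CCCD) ≤ max {ρ(CCCC), ρ(CDCD), ρ(CCDD)}`. -/
theorem stmt_14 (C D : Matrix (Fin 2) (Fin 2) ℂ)
    (htr : C.trace = D.trace) (hC : C.det = 1) (hD : D.det = 1)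
    (hu : ∃ u : ℝ, C.trace ^ 2 = (u : ℂ))
    (hz : ∃ z : ℝ, (C * D).trace = (z : ℂ)) :
    spectralRadius ℂ (C * C * C * D) ≤
      max (spectralRadius ℂ (C * C * C * C))
        (max (spectralRadius ℂ (C * D * C * D))
          (spectralRadius ℂ (C * C * D * D))) := by
  obtain ⟨u, hu⟩ := hu
  obtain ⟨z, hz⟩ := hz
  have dA : (C * C * C * D).det = 1 := by simp [Matrix.det_mul, hC, hD]
  have dB : (C * C * C * C).det = 1 := by simp [Matrix.det_mul, hC]
  have dE : (C * D * C * D).det = 1 := by simp [Matrix.det_mul, hC, hD]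
  have dF : (C * C * D * D).det = 1 := by simp [Matrix.det_mul, hC, hD]
  have tA : (C * C * C * D).trace = (((u-1)*z-u : ℝ) : ℂ) := by
    rw [stmt14_tr1, hC, ← htr, hz]
    push_cast
    linear_combination ((z : ℂ) - 1) * hu
  have tB : (C * C * C * C).trace = ((u^2-4*u+2 : ℝ) : ℂ) := by
    rw [stmt14_tr2, hC]
    push_cast
    linear_combination (C.trace ^ 2 + (u : ℂ) - 4) * hu
  have tE : (C * D * C * D).trace = ((z^2-2 : ℝ) : ℂ) := by
    rw [stmt14_tr3, hz, hC, hD]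
    push_cast
    ring
  have tF : (C * C * D * D).trace = ((u*z-2*u+2 : ℝ) : ℂ) := by
    rw [stmt14_tr4, ← htr, hz, hC, hD]
    push_cast
    linear_combination ((z : ℂ) - 2) * hu
  rcases le_max_iff.1 (stmt14_realineq u z) with h | h
  · exact le_trans (stmt14_specrad_mono _ _ dA dB _ _ tA tB h) (le_max_left _ _)
  · rcases le_max_iff.1 h with h' | h'
    · exact le_trans (stmt14_specrad_mono _ _ dA dE _ _ tA tE h')
        (le_trans (le_max_left _ _) (le_max_right _ _))
    · exact le_trans (stmt14_specrad_mono _ _ dA dF _ _ tA tF h')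
        (le_trans (le_max_right _ _) (le_max_right _ _))
end

section
/- Let A and B be arbitrary real 2×2 matrices. Then ρ(AABABABB) ≤ max{ρ(ABABABAB), ρ(AABBAABB), ρ(AABABBAB)}, where ρ denotes the spectral radius and each expression is the product of the matrices A and B in the indicated order. -/
open Matrix
open scoped ENNReal

set_option maxHeartbeats 1000000

/-- The spectral radius of a real 2×2 matrix: the maximum of the moduli of its
complex eigenvalues, obtained by viewing the matrix as a complex matrix. -/
noncomputable def rho (A : Matrix (Fin 2) (Fin 2) ℝ) : ℝ≥0∞ :=
  spectralRadius ℂ (A.map (Complex.ofReal))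

/- ## Part A: the key real inequality on traces -/

private lemma aux2 (P Q D : ℝ) (hD : 0 ≤ D) (hPQ : Q ≤ P) :
    P*Q + D*(P+Q) + 2*D^2 ≤
      max |P^2 - 2*D^2| (max |Q^2 - 2*D^2| |P*Q + 2*D*(P+Q) + 2*D^2|) := by
  have h1 : P^2 - 2*D^2 ≤ max |P^2 - 2*D^2| (max |Q^2 - 2*D^2| |P*Q + 2*D*(P+Q) + 2*D^2|) :=
    le_trans (le_abs_self _) (le_max_left _ _)
  have h1' : -(P^2 - 2*D^2) ≤ max |P^2 - 2*D^2| (max |Q^2 - 2*D^2| |P*Q + 2*D*(P+Q) + 2*D^2|) :=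
    le_trans (neg_le_abs _) (le_max_left _ _)
  have h2 : Q^2 - 2*D^2 ≤ max |P^2 - 2*D^2| (max |Q^2 - 2*D^2| |P*Q + 2*D*(P+Q) + 2*D^2|) :=
    le_trans (le_abs_self _) (le_trans (le_max_left _ _) (le_max_right _ _))
  have h2' : -(Q^2 - 2*D^2) ≤ max |P^2 - 2*D^2| (max |Q^2 - 2*D^2| |P*Q + 2*D*(P+Q) + 2*D^2|) :=
    le_trans (neg_le_abs _) (le_trans (le_max_left _ _) (le_max_right _ _))
  have h3 : P*Q + 2*D*(P+Q) + 2*D^2 ≤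
      max |P^2 - 2*D^2| (max |Q^2 - 2*D^2| |P*Q + 2*D*(P+Q) + 2*D^2|) :=
    le_trans (le_abs_self _) (le_trans (le_max_right _ _) (le_max_right _ _))
  have h3' : -(P*Q + 2*D*(P+Q) + 2*D^2) ≤
      max |P^2 - 2*D^2| (max |Q^2 - 2*D^2| |P*Q + 2*D*(P+Q) + 2*D^2|) :=
    le_trans (neg_le_abs _) (le_trans (le_max_right _ _) (le_max_right _ _))
  rcases le_total 0 (P+Q) with hS | hS
  · -- f = t3 - D*(P+Q) ≤ t3
    nlinarith [mul_nonneg hD hS]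
  · rcases le_total (-D) P with hP | hP
    · -- f = -(P² - 2D²) + (P+Q)(P+D) ≤ -(P² - 2D²)
      nlinarith [mul_nonpos_of_nonpos_of_nonneg hS (by linarith : (0:ℝ) ≤ P + D)]
    · -- region: Q ≤ P ≤ -D ≤ 0
      -- set u = -Q - D ≥ v = -P - D ≥ 0
      by_contra hcon
      push_neg at hcon
      have ht2 : Q^2 - 2*D^2 < P*Q + D*(P+Q) + 2*D^2 := lt_of_le_of_lt h2 hcon
      have ht3 : -(P*Q + 2*D*(P+Q) + 2*D^2) < P*Q + D*(P+Q) + 2*D^2 := lt_of_le_of_lt h3' hcon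
      have hv : (0:ℝ) ≤ -P - D := by linarith
      have hu : (0:ℝ) ≤ -Q - D := by linarith
      have huv : -P - D ≤ -Q - D := by linarith
      set u : ℝ := -Q - D with hudef
      set v : ℝ := -P - D with hvdef
      -- ht2 becomes: u^2 - u*v + 2*D*u - 2*D^2 < 0
      have c1 : u^2 - u*v + 2*D*u - 2*D^2 < 0 := by
        have : P = -(v + D) := by rw [hvdef]; ring
        nlinarith [ht2]
      have c2 : 0 < 2*u*v - D*u - D*v := by nlinarith [ht3]
      -- derive u < D
      have huD : u < D := by
        rcases eq_or_lt_of_le hD with hD0 | hD0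
        · exfalso; nlinarith [mul_nonneg hu (sub_nonneg.2 huv)]
        · nlinarith [mul_nonneg hu (sub_nonneg.2 huv)]
      -- contradiction: 2uv ≤ Du + Dv
      nlinarith [mul_le_mul_of_nonneg_right (le_of_lt huD) hv,
        mul_le_mul_of_nonneg_left (le_of_lt huD) hu, mul_nonneg hu (sub_nonneg.2 huv)]

private lemma aux1 (P Q D : ℝ) (hD : 0 ≤ D) :
    P*Q + D*(P+Q) + 2*D^2 ≤
      max |P^2 - 2*D^2| (max |Q^2 - 2*D^2| |P*Q + 2*D*(P+Q) + 2*D^2|) := by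
  rcases le_total Q P with h | h
  · exact aux2 P Q D hD h
  · have := aux2 Q P D hD h
    rw [show Q*P + 2*D*(Q+P) + 2*D^2 = P*Q + 2*D*(P+Q) + 2*D^2 from by ring,
      show Q*P + D*(Q+P) + 2*D^2 = P*Q + D*(P+Q) + 2*D^2 from by ring,
      max_left_comm] at this
    exact this

private lemma key (P Q D : ℝ) :
    |(-(P*Q) - D*(P+Q) - 2*D^2)| ≤
      max |P^2 - 2*D^2| (max |Q^2 - 2*D^2| |(-(P*Q) - 2*D*(P+Q) - 2*D^2)|) := by
  rw [show -(P*Q) - 2*D*(P+Q) - 2*D^2 = -(P*Q + 2*D*(P+Q) + 2*D^2) from by ring, abs_neg]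
  rw [abs_le]
  constructor
  · -- lower bound: f = PQ + D(P+Q) + 2D² ≤ R
    have hf : P*Q + D*(P+Q) + 2*D^2 ≤
        max |P^2 - 2*D^2| (max |Q^2 - 2*D^2| |P*Q + 2*D*(P+Q) + 2*D^2|) := by
      rcases le_total 0 D with hD | hD
      · exact aux1 P Q D hD
      · have := aux1 (-P) (-Q) (-D) (by linarith)
        rw [show (-P)*(-Q) + (-D)*((-P)+(-Q)) + 2*(-D)^2 = P*Q + D*(P+Q) + 2*D^2 from by ring,
          show (-P)^2 - 2*(-D)^2 = P^2 - 2*D^2 from by ring,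
          show (-Q)^2 - 2*(-D)^2 = Q^2 - 2*D^2 from by ring,
          show (-P)*(-Q) + 2*(-D)*((-P)+(-Q)) + 2*(-D)^2 = P*Q + 2*D*(P+Q) + 2*D^2
            from by ring] at this
        exact this
    linarith
  · -- upper bound: 4t0 = t1 + t2 + 2t3 - (P+Q)²
    have e1 : P^2 - 2*D^2 ≤ |P^2 - 2*D^2| := le_abs_self _
    have e2 : Q^2 - 2*D^2 ≤ |Q^2 - 2*D^2| := le_abs_self _
    have e3 : -(P*Q + 2*D*(P+Q) + 2*D^2) ≤ |P*Q + 2*D*(P+Q) + 2*D^2| := neg_le_abs _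
    have hs : (0:ℝ) ≤ (P+Q)^2 := sq_nonneg _
    have m1 : |P^2 - 2*D^2| ≤
        max |P^2 - 2*D^2| (max |Q^2 - 2*D^2| |P*Q + 2*D*(P+Q) + 2*D^2|) := le_max_left _ _
    have m2 : |Q^2 - 2*D^2| ≤
        max |P^2 - 2*D^2| (max |Q^2 - 2*D^2| |P*Q + 2*D*(P+Q) + 2*D^2|) :=
      le_trans (le_max_left _ _) (le_max_right _ _)
    have m3 : |P*Q + 2*D*(P+Q) + 2*D^2| ≤
        max |P^2 - 2*D^2| (max |Q^2 - 2*D^2| |P*Q + 2*D*(P+Q) + 2*D^2|) :=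
      le_trans (le_max_right _ _) (le_max_right _ _)
    nlinarith

/- ## Part B: comparing maximal root moduli of real quadratics -/

private lemma maxle (a b L l : ℝ) (ha : 0 ≤ a) (hl : 0 ≤ l) (hlL : l ≤ L)
    (hprod : a*b = L*l) (hsum : a + b ≤ L + l) : a ≤ L := by
  by_contra h
  push_neg at h
  have h1 : 0 < (a - L) * (a - l) := mul_pos (by linarith) (by linarith)
  have h2 : a*(a+b) ≤ a*(L+l) := mul_le_mul_of_nonneg_left hsum ha
  nlinarith

private lemma core (s t d : ℝ) (hd : 0 ≤ d) (μ1 μ2 l1 l2 : ℂ)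
    (hμs : μ1 + μ2 = (s:ℂ)) (hμp : μ1 * μ2 = (d:ℂ))
    (hls : l1 + l2 = (t:ℂ)) (hlp : l1 * l2 = (d:ℂ))
    (hst : |s| ≤ |t|) :
    max ‖μ1‖ ‖μ2‖ ≤ max ‖l1‖ ‖l2‖ := by
  have hLl : ‖l1‖ * ‖l2‖ = d := by
    rw [← norm_mul, hlp, Complex.norm_real, Real.norm_eq_abs, abs_of_nonneg hd]
  have hLl' : max ‖l1‖ ‖l2‖ * min ‖l1‖ ‖l2‖ = d := by
    rcases le_total ‖l1‖ ‖l2‖ with h | h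
    · rw [max_eq_right h, min_eq_left h, mul_comm]; exact hLl
    · rw [max_eq_left h, min_eq_right h]; exact hLl
  have hmin_nonneg : 0 ≤ min ‖l1‖ ‖l2‖ := le_min (norm_nonneg _) (norm_nonneg _)
  have hminmax : min ‖l1‖ ‖l2‖ ≤ max ‖l1‖ ‖l2‖ := min_le_max
  have hsumL : |t| ≤ max ‖l1‖ ‖l2‖ + min ‖l1‖ ‖l2‖ := by
    have : |t| = ‖(t:ℂ)‖ := by rw [Complex.norm_real, Real.norm_eq_abs]
    rw [this, ← hls]
    calc ‖l1 + l2‖ ≤ ‖l1‖ + ‖l2‖ := norm_add_le _ _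
      _ ≤ max ‖l1‖ ‖l2‖ + min ‖l1‖ ‖l2‖ := by
          rcases le_total ‖l1‖ ‖l2‖ with h | h
          · rw [max_eq_right h, min_eq_left h]; linarith
          · rw [max_eq_left h, min_eq_right h]
  -- dichotomy
  have hq : μ1*μ1 - (s:ℂ)*μ1 + (d:ℂ) = 0 := by rw [← hμs, ← hμp]; ring
  have hq' : (starRingEnd ℂ) μ1 * (starRingEnd ℂ) μ1 - (s:ℂ)*(starRingEnd ℂ) μ1 + (d:ℂ) = 0 := by
    have h := congrArg (starRingEnd ℂ) hq
    simpa [_root_.map_mul, _root_.map_sub, _root_.map_add, Complex.conj_ofReal] using h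
  have hμ2 : μ2 = (s:ℂ) - μ1 := by linear_combination hμs
  have h0 : ((starRingEnd ℂ) μ1 - μ1) * ((starRingEnd ℂ) μ1 - μ2) = 0 := by
    rw [hμ2]; linear_combination hq' - hq
  rcases mul_eq_zero.mp h0 with hc | hc
  · -- μ1 is real
    have hc' : (starRingEnd ℂ) μ1 = μ1 := sub_eq_zero.mp hc
    obtain ⟨r, hr⟩ := Complex.conj_eq_iff_real.mp hc'
    have hμ2r : μ2 = ((s - r : ℝ) : ℂ) := by rw [hμ2, hr]; push_cast; ring
    have n1 : ‖μ1‖ = |r| := by rw [hr, Complex.norm_real, Real.norm_eq_abs]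
    have n2 : ‖μ2‖ = |s - r| := by rw [hμ2r, Complex.norm_real, Real.norm_eq_abs]
    have hrp : r * (s - r) = d := by
      have h := hμp
      rw [hr, hμ2r] at h
      exact_mod_cast h
    have habs : |r| + |s - r| = |s| := by
      rcases le_total 0 r with g1 | g1 <;> rcases le_total 0 (s - r) with g2 | g2
      · rw [abs_of_nonneg g1, abs_of_nonneg g2, abs_of_nonneg (by linarith)]; ring
      · have hz : r * (s - r) = 0 :=
          le_antisymm (mul_nonpos_of_nonneg_of_nonpos g1 g2) (by rw [hrp]; exact hd)
        rcases mul_eq_zero.mp hz with g | g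
        · simp [g]
        · have hsr : s = r := by linarith
          simp [hsr]
      · have hz : r * (s - r) = 0 :=
          le_antisymm (mul_nonpos_of_nonpos_of_nonneg g1 g2) (by rw [hrp]; exact hd)
        rcases mul_eq_zero.mp hz with g | g
        · simp [g]
        · have hsr : s = r := by linarith
          simp [hsr]
      · rw [abs_of_nonpos g1, abs_of_nonpos g2, abs_of_nonpos (by linarith)]; ring
    have hprod : |r| * |s - r| = d := by
      rw [← abs_mul, hrp, abs_of_nonneg hd]
    have hsum : |r| + |s - r| ≤ max ‖l1‖ ‖l2‖ + min ‖l1‖ ‖l2‖ := by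
      rw [habs]; exact le_trans hst hsumL
    have ha : |r| ≤ max ‖l1‖ ‖l2‖ := by
      refine maxle _ (|s - r|) _ _ (abs_nonneg _) hmin_nonneg hminmax ?_ hsum
      rw [hprod, hLl']
    have hb : |s - r| ≤ max ‖l1‖ ‖l2‖ := by
      refine maxle _ (|r|) _ _ (abs_nonneg _) hmin_nonneg hminmax ?_ ?_
      · rw [mul_comm, hprod, hLl']
      · linarith
    rw [n1, n2]
    exact max_le ha hb
  · -- conjugate pair
    have hc' : (starRingEnd ℂ) μ1 = μ2 := sub_eq_zero.mp hc
    have hn : ‖μ2‖ = ‖μ1‖ := by rw [← hc']; exact RCLike.norm_conj _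
    have hsq : ‖μ1‖^2 = d := by
      have h := hμp
      rw [← hc', Complex.mul_conj'] at h
      exact_mod_cast h
    have hLnn : 0 ≤ max ‖l1‖ ‖l2‖ := le_trans (norm_nonneg l1) (le_max_left _ _)
    have hmm : ‖μ1‖^2 ≤ (max ‖l1‖ ‖l2‖)^2 := by
      rw [hsq, ← hLl']
      nlinarith [hminmax, hLnn]
    have h1 : ‖μ1‖ ≤ max ‖l1‖ ‖l2‖ := by
      nlinarith [norm_nonneg μ1, hLnn, hmm]
    rw [hn]
    exact max_le h1 h1

/- ## Part C: spectral radius of a 2×2 real matrix via roots of its char. polynomial -/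

private lemma spectrum_quad (M : Matrix (Fin 2) (Fin 2) ℂ) (z : ℂ) :
    z ∈ spectrum ℂ M ↔ z*z - trace M * z + det M = 0 := by
  rw [spectrum.mem_iff, Matrix.isUnit_iff_isUnit_det, isUnit_iff_ne_zero, not_ne_iff]
  have h : det (algebraMap ℂ (Matrix (Fin 2) (Fin 2) ℂ) z - M) = z*z - trace M * z + det M := by
    simp only [Matrix.det_fin_two, Matrix.trace_fin_two, Matrix.sub_apply,
      Matrix.algebraMap_matrix_apply]
    norm_num
    ring
  rw [h]

private lemma spectrum_pair (M : Matrix (Fin 2) (Fin 2) ℂ) (μ ν : ℂ)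
    (h1 : μ + ν = trace M) (h2 : μ * ν = det M) :
    spectrum ℂ M = {μ, ν} := by
  ext z
  rw [spectrum_quad]
  have h : z*z - trace M * z + det M = (z - μ)*(z - ν) := by rw [← h1, ← h2]; ring
  rw [h, mul_eq_zero, sub_eq_zero, sub_eq_zero]
  simp [Set.mem_insert_iff, Set.mem_singleton_iff]

private lemma rho_eq (M : Matrix (Fin 2) (Fin 2) ℝ) (μ ν : ℂ)
    (h1 : μ + ν = ((trace M : ℝ) : ℂ)) (h2 : μ * ν = ((det M : ℝ) : ℂ)) :
    rho M = max (‖μ‖₊ : ℝ≥0∞) (‖ν‖₊ : ℝ≥0∞) := by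
  have htr : trace (M.map Complex.ofReal) = ((trace M : ℝ) : ℂ) := by
    simp [Matrix.trace_fin_two, Matrix.map_apply]
  have hdet : det (M.map Complex.ofReal) = ((det M : ℝ) : ℂ) := by
    simp [Matrix.det_fin_two, Matrix.map_apply]
  have hs : spectrum ℂ (M.map Complex.ofReal) = {μ, ν} :=
    spectrum_pair _ μ ν (by rw [htr]; exact h1) (by rw [hdet]; exact h2)
  rw [rho, spectralRadius, hs, iSup_pair]

private lemma roots_exist (t d : ℝ) :
    ∃ μ ν : ℂ, μ + ν = ((t:ℝ):ℂ) ∧ μ * ν = ((d:ℝ):ℂ) := by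
  obtain ⟨w, hw⟩ := IsAlgClosed.exists_pow_nat_eq ((t:ℂ)^2 - 4*(d:ℂ)) (by norm_num : 0 < 2)
  refine ⟨((t:ℂ) + w)/2, ((t:ℂ) - w)/2, by ring, ?_⟩
  field_simp
  linear_combination -hw

private lemma rho_mono (M N : Matrix (Fin 2) (Fin 2) ℝ) (hdet : det M = det N)
    (hd : 0 ≤ det M) (htr : |trace M| ≤ |trace N|) : rho M ≤ rho N := by
  obtain ⟨μ1, μ2, hμs, hμp⟩ := roots_exist (trace M) (det M)
  obtain ⟨l1, l2, hls, hlp⟩ := roots_exist (trace N) (det N)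
  rw [rho_eq M μ1 μ2 hμs hμp, rho_eq N l1 l2 hls hlp]
  have hcore : max ‖μ1‖ ‖μ2‖ ≤ max ‖l1‖ ‖l2‖ := by
    refine core (trace M) (trace N) (det M) hd μ1 μ2 l1 l2 hμs hμp hls ?_ htr
    rw [hdet]
    exact hlp
  have hnn : max ‖μ1‖₊ ‖μ2‖₊ ≤ max ‖l1‖₊ ‖l2‖₊ := by
    rw [← NNReal.coe_le_coe, NNReal.coe_max, NNReal.coe_max, coe_nnnorm, coe_nnnorm,
      coe_nnnorm, coe_nnnorm]
    exact hcore
  rw [← ENNReal.coe_max, ← ENNReal.coe_max]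
  exact ENNReal.coe_le_coe.2 hnn

/- ## Part D: trace identities for the four words -/

private lemma tr_w0 (A B : Matrix (Fin 2) (Fin 2) ℝ) :
    trace (A * A * B * A * B * A * B * B) =
      -((trace (A*B)^2 - 2*(det A*det B)) *
          ((trace A)^2*det B + (trace B)^2*det A - trace A*trace B*trace (A*B)
            - 2*(det A*det B)))
        - (det A*det B)*((trace (A*B)^2 - 2*(det A*det B))
            + ((trace A)^2*det B + (trace B)^2*det A - trace A*trace B*trace (A*B)
              - 2*(det A*det B)))
        - 2*(det A*det B)^2 := by
  rw [Matrix.eta_fin_two A, Matrix.eta_fin_two B]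
  simp only [Matrix.mul_fin_two, Matrix.trace_fin_two_of, Matrix.det_fin_two_of]
  ring

private lemma tr_w1 (A B : Matrix (Fin 2) (Fin 2) ℝ) :
    trace (A * B * A * B * A * B * A * B) =
      (trace (A*B)^2 - 2*(det A*det B))^2 - 2*(det A*det B)^2 := by
  rw [Matrix.eta_fin_two A, Matrix.eta_fin_two B]
  simp only [Matrix.mul_fin_two, Matrix.trace_fin_two_of, Matrix.det_fin_two_of]
  ring

private lemma tr_w2 (A B : Matrix (Fin 2) (Fin 2) ℝ) :
    trace (A * A * B * B * A * A * B * B) =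
      ((trace A)^2*det B + (trace B)^2*det A - trace A*trace B*trace (A*B)
          - 2*(det A*det B))^2 - 2*(det A*det B)^2 := by
  rw [Matrix.eta_fin_two A, Matrix.eta_fin_two B]
  simp only [Matrix.mul_fin_two, Matrix.trace_fin_two_of, Matrix.det_fin_two_of]
  ring

private lemma tr_w3 (A B : Matrix (Fin 2) (Fin 2) ℝ) :
    trace (A * A * B * A * B * B * A * B) =
      -((trace (A*B)^2 - 2*(det A*det B)) *
          ((trace A)^2*det B + (trace B)^2*det A - trace A*trace B*trace (A*B)
            - 2*(det A*det B)))
        - 2*(det A*det B)*((trace (A*B)^2 - 2*(det A*det B))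
            + ((trace A)^2*det B + (trace B)^2*det A - trace A*trace B*trace (A*B)
              - 2*(det A*det B)))
        - 2*(det A*det B)^2 := by
  rw [Matrix.eta_fin_two A, Matrix.eta_fin_two B]
  simp only [Matrix.mul_fin_two, Matrix.trace_fin_two_of, Matrix.det_fin_two_of]
  ring

/- ## Main theorem -/

/-- For arbitrary real 2×2 matrices `A`, `B`,
`ρ(AABABABB) ≤ max {ρ(ABABABAB), ρ(AABBAABB), ρ(AABABBAB)}`. -/
theorem stmt_15 (A B : Matrix (Fin 2) (Fin 2) ℝ) :
    rho (A * A * B * A * B * A * B * B) ≤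
      max (rho (A * B * A * B * A * B * A * B))
        (max (rho (A * A * B * B * A * A * B * B))
          (rho (A * A * B * A * B * B * A * B))) := by
  set P : ℝ := trace (A*B)^2 - 2*(det A*det B) with hP
  set Q : ℝ := (trace A)^2*det B + (trace B)^2*det A - trace A*trace B*trace (A*B)
      - 2*(det A*det B) with hQ
  set D : ℝ := det A * det B with hD
  have e0 : trace (A * A * B * A * B * A * B * B) = -(P*Q) - D*(P+Q) - 2*D^2 := by
    rw [tr_w0]
  have e1 : trace (A * B * A * B * A * B * A * B) = P^2 - 2*D^2 := by
    rw [tr_w1]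
  have e2 : trace (A * A * B * B * A * A * B * B) = Q^2 - 2*D^2 := by
    rw [tr_w2]
  have e3 : trace (A * A * B * A * B * B * A * B) = -(P*Q) - 2*D*(P+Q) - 2*D^2 := by
    rw [tr_w3]
  have d0 : det (A * A * B * A * B * A * B * B) = (det A * det B)^4 := by
    simp only [det_mul]; ring
  have d1 : det (A * B * A * B * A * B * A * B) = (det A * det B)^4 := by
    simp only [det_mul]; ring
  have d2 : det (A * A * B * B * A * A * B * B) = (det A * det B)^4 := by
    simp only [det_mul]; ring
  have d3 : det (A * A * B * A * B * B * A * B) = (det A * det B)^4 := by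
    simp only [det_mul]; ring
  have hpos : (0:ℝ) ≤ det (A * A * B * A * B * A * B * B) := by
    rw [d0]
    positivity
  have hkey : |trace (A * A * B * A * B * A * B * B)| ≤
      max |trace (A * B * A * B * A * B * A * B)|
        (max |trace (A * A * B * B * A * A * B * B)|
          |trace (A * A * B * A * B * B * A * B)|) := by
    rw [e0, e1, e2, e3]
    exact key P Q D
  rcases le_max_iff.mp hkey with h | h
  · exact le_trans (rho_mono _ _ (by rw [d0, d1]) hpos h) (le_max_left _ _)
  · rcases le_max_iff.mp h with h' | h'
    · exact le_trans (rho_mono _ _ (by rw [d0, d2]) hpos h')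
        (le_trans (le_max_left _ _) (le_max_right _ _))
    · exact le_trans (rho_mono _ _ (by rw [d0, d3]) hpos h')
        (le_trans (le_max_right _ _) (le_max_right _ _))
end

section
/- Let A and B be arbitrary real 2×2 matrices. Then ρ(AABABABB)^(1/8) ≤ max{ρ(AB)^(1/2), ρ(AABB)^(1/4), ρ(AABABBAB)^(1/8)}. In particular, the product AABABABB never delivers a strict maximum of the normalized spectral radius among all products of the matrices A and B of length at most 8. -/
open Matrix
open scoped ENNReal

/-- The candidate value of the spectral radius of a 2×2 matrix with trace `τ`
and determinant `δ`. -/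
noncomputable def rr (τ δ : ℝ) : ℝ :=
  if 4*δ ≤ τ^2 then (|τ| + Real.sqrt (τ^2 - 4*δ))/2 else Real.sqrt δ

lemma spec_iff (M : Matrix (Fin 2) (Fin 2) ℝ) (z : ℂ) :
    z ∈ spectrum ℂ (M.map Complex.ofReal) ↔
      z^2 - (M.trace : ℂ)*z + (M.det : ℂ) = 0 := by
  rw [spectrum.mem_iff, Matrix.isUnit_iff_isUnit_det, isUnit_iff_ne_zero, not_not]
  simp only [Algebra.algebraMap_eq_smul_one]
  rw [Matrix.det_fin_two]
  simp only [Matrix.sub_apply, Matrix.smul_apply, Matrix.one_apply, Matrix.map_apply,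
    Matrix.trace_fin_two, Matrix.det_fin_two]
  simp only [smul_eq_mul, mul_one, mul_zero, smul_zero, smul_eq_mul]
  push_cast
  constructor <;> intro h <;> linear_combination h

lemma max_abs_half (τ e : ℝ) (he : 0 ≤ e) :
    max |(τ + e)/2| |(τ - e)/2| = (|τ| + e)/2 := by
  rcases abs_cases τ with ⟨h1,h2⟩|⟨h1,h2⟩ <;>
    rcases abs_cases ((τ+e)/2) with ⟨h3,h4⟩|⟨h3,h4⟩ <;>
    rcases abs_cases ((τ-e)/2) with ⟨h5,h6⟩|⟨h5,h6⟩ <;>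
    rw [max_def] <;> split_ifs <;> linarith

lemma enn_norm_real (x : ℝ) : (‖(x : ℂ)‖₊ : ℝ≥0∞) = ENNReal.ofReal |x| := by
  rw [← enorm_eq_nnnorm, ← ofReal_norm]
  simp [Real.norm_eq_abs]

lemma ofReal_max' (a b : ℝ) :
    max (ENNReal.ofReal a) (ENNReal.ofReal b) = ENNReal.ofReal (max a b) := by
  rcases le_total a b with h|h <;>
    simp [max_eq_right, max_eq_left, h, ENNReal.ofReal_le_ofReal h]

/-- The spectral radius of a real 2×2 matrix in terms of its trace and
determinant. -/
lemma rho_eq_s16 (M : Matrix (Fin 2) (Fin 2) ℝ) :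
    rho M = ENNReal.ofReal (rr M.trace M.det) := by
  set τ := M.trace
  set δ := M.det
  unfold rho spectralRadius rr
  split_ifs with h
  · -- real eigenvalues
    set e := Real.sqrt (τ^2 - 4*δ) with hedef
    have he0 : 0 ≤ e := Real.sqrt_nonneg _
    have he : e^2 = τ^2 - 4*δ := Real.sq_sqrt (by linarith)
    have hspec : spectrum ℂ (M.map Complex.ofReal) =
        {(((τ+e)/2 : ℝ) : ℂ), (((τ-e)/2 : ℝ) : ℂ)} := by
      ext z
      rw [spec_iff]
      have key : z^2 - (τ:ℂ)*z + (δ:ℂ) =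
          (z - (((τ+e)/2 : ℝ) : ℂ)) * (z - (((τ-e)/2 : ℝ) : ℂ)) := by
        have : ((e:ℂ))^2 = (τ:ℂ)^2 - 4*(δ:ℂ) := by exact_mod_cast he
        push_cast
        linear_combination (1/4 : ℂ) * this
      rw [key, mul_eq_zero, sub_eq_zero, sub_eq_zero]
      simp [Set.mem_insert_iff]
    rw [hspec, iSup_pair, enn_norm_real, enn_norm_real, ofReal_max',
      max_abs_half τ e he0]
  · -- complex eigenvalues
    push_neg at h
    set e := Real.sqrt (4*δ - τ^2) with hedef
    have he0 : 0 ≤ e := Real.sqrt_nonneg _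
    have he : e^2 = 4*δ - τ^2 := Real.sq_sqrt (by linarith)
    have hδ : 0 < δ := by nlinarith [sq_nonneg τ]
    set z₁ : ℂ := ((τ/2 : ℝ) : ℂ) + ((e/2 : ℝ) : ℂ) * Complex.I with hz₁
    set z₂ : ℂ := ((τ/2 : ℝ) : ℂ) - ((e/2 : ℝ) : ℂ) * Complex.I with hz₂
    have hspec : spectrum ℂ (M.map Complex.ofReal) = {z₁, z₂} := by
      ext z
      rw [spec_iff]
      have key : z^2 - (τ:ℂ)*z + (δ:ℂ) = (z - z₁) * (z - z₂) := by
        have h1 : ((e:ℂ))^2 = 4*(δ:ℂ) - (τ:ℂ)^2 := by exact_mod_cast he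
        have h2 : (Complex.I)^2 = -1 := Complex.I_sq
        rw [hz₁, hz₂]
        push_cast
        linear_combination ((e:ℂ)^2/4) * h2 - (1/4 : ℂ) * h1
      rw [key, mul_eq_zero, sub_eq_zero, sub_eq_zero]
      simp [Set.mem_insert_iff]
    have hn : ∀ w ∈ ({z₁, z₂} : Set ℂ), (‖w‖₊ : ℝ≥0∞) = ENNReal.ofReal (Real.sqrt δ) := by
      intro w hw
      have hnorm : ‖w‖ = Real.sqrt δ := by
        rcases hw with hw | hw <;>
        · subst hw
          rw [Complex.norm_def]
          congr 1
          simp [hz₁, hz₂, Complex.normSq_apply]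
          nlinarith [he]
      rw [← enorm_eq_nnnorm, ← ofReal_norm, hnorm]
    rw [hspec, iSup_pair, hn z₁ (by simp), hn z₂ (by simp), max_self]

lemma rr_nonneg (τ δ : ℝ) : 0 ≤ rr τ δ := by
  unfold rr; split_ifs
  · positivity
  · exact Real.sqrt_nonneg _

lemma sqrt_le_rr (τ δ : ℝ) : Real.sqrt δ ≤ rr τ δ := by
  unfold rr; split_ifs with h
  · rcases le_or_gt δ 0 with hδ | hδ
    · calc Real.sqrt δ ≤ 0 := by simpa using Real.sqrt_le_sqrt hδ
        _ ≤ _ := by positivity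
    · have h1 : Real.sqrt δ ≤ |τ|/2 := by
        have : |τ|/2 = Real.sqrt ((τ^2)/4) := by
          rw [show (τ^2)/4 = (|τ|/2)^2 by rw [div_pow, sq_abs]; ring]
          exact (Real.sqrt_sq (by positivity)).symm
        rw [this]
        exact Real.sqrt_le_sqrt (by linarith)
      have h2 : 0 ≤ Real.sqrt (τ^2 - 4*δ) := Real.sqrt_nonneg _
      linarith
  · exact le_refl _

lemma rr_mono {τ₁ τ₂ δ : ℝ} (h : |τ₁| ≤ |τ₂|) : rr τ₁ δ ≤ rr τ₂ δ := by
  have hsq : τ₁^2 ≤ τ₂^2 := by rw [← sq_abs τ₁, ← sq_abs τ₂]; nlinarith [abs_nonneg τ₁]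
  have hle := sqrt_le_rr τ₂ δ
  unfold rr at *
  split_ifs with h1 h2 h2
  · have := Real.sqrt_le_sqrt (show τ₁^2 - 4*δ ≤ τ₂^2 - 4*δ by linarith)
    linarith
  · linarith
  · rwa [if_pos h2] at hle
  · exact le_refl _

lemma rr_sq (τ δ : ℝ) : (rr τ δ)^2 = rr (τ^2 - 2*δ) (δ^2) := by
  unfold rr
  split_ifs with h1 h2 h2
  · have he : (Real.sqrt (τ^2-4*δ))^2 = τ^2-4*δ := Real.sq_sqrt (by linarith)
    have habs : |τ^2-2*δ| = τ^2-2*δ := abs_of_nonneg (by nlinarith [sq_nonneg τ])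
    have hsq : Real.sqrt ((τ^2-2*δ)^2 - 4*δ^2) = |τ| * Real.sqrt (τ^2-4*δ) := by
      rw [show (τ^2-2*δ)^2-4*δ^2 = (τ^2)*(τ^2-4*δ) by ring,
        Real.sqrt_mul (sq_nonneg τ), Real.sqrt_sq_eq_abs]
    rw [habs, hsq]
    linear_combination (1/4) * (sq_abs τ) + (1/4) * he
  · exfalso
    push_neg at h2
    nlinarith [mul_nonneg (sq_nonneg τ) (show (0:ℝ) ≤ τ^2-4*δ by linarith)]
  · have hδ : 0 < δ := by nlinarith [sq_nonneg τ]
    have h3 : 0 ≤ τ^2 * (τ^2 - 4*δ) := by nlinarith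
    have h4 : τ^2 = 0 := by nlinarith [sq_nonneg τ]
    have hτ0 : τ = 0 := by
      have := sq_nonneg τ; nlinarith [abs_nonneg τ, sq_abs τ]
    rw [hτ0, Real.sq_sqrt hδ.le,
      show (0:ℝ)^2 - 2*δ = -(2*δ) by ring, abs_neg, abs_of_nonneg (by linarith),
      show (-(2*δ))^2 - 4*δ^2 = 0 by ring, Real.sqrt_zero]
    ring
  · have hδ : 0 < δ := by nlinarith [sq_nonneg τ]
    rw [Real.sq_sqrt hδ.le, Real.sqrt_sq hδ.le]

/-- The key algebraic inequality, a consequence of the polynomial identity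
`2*τ₁^2 = τ₂^2 + A*B`. -/
lemma key_ineq (t d s : ℝ) :
    |(t^2-d)*s - t^2*d| ≤
      max |(t^2-2*d)^2-2*d^2| (max |s^2-2*d^2| |t^2*s-2*t^2*d+2*d^2|) := by
  set τ1 := (t^2-d)*s - t^2*d with hτ1
  set A := (t^2-2*d)^2-2*d^2 with hA
  set B := s^2-2*d^2 with hB
  set τ2 := t^2*s-2*t^2*d+2*d^2 with hτ2
  have hid : 2*τ1^2 = τ2^2 + A*B := by rw [hτ1, hτ2, hA, hB]; ring
  rcases le_total |τ1| |τ2| with h | h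
  · exact le_max_of_le_right (le_max_of_le_right h)
  · have hsq : τ2^2 ≤ τ1^2 := by
      rw [← sq_abs τ1, ← sq_abs τ2]; nlinarith [abs_nonneg τ2]
    have hAB : τ1^2 ≤ |A| * |B| := by
      have := le_abs_self (A*B)
      rw [abs_mul] at this
      linarith
    rcases le_total |A| |B| with hab | hab
    · refine le_max_of_le_right (le_max_of_le_left ?_)
      have : |τ1|^2 ≤ |B|^2 := by rw [sq_abs]; nlinarith [abs_nonneg A]
      nlinarith [abs_nonneg τ1, abs_nonneg B]
    · refine le_max_of_le_left ?_
      have : |τ1|^2 ≤ |A|^2 := by rw [sq_abs]; nlinarith [abs_nonneg B]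
      nlinarith [abs_nonneg τ1, abs_nonneg A]

lemma final_scalar (t d s : ℝ) :
    rr ((t^2-d)*s - t^2*d) ((d^2)^2) ≤
      max ((rr t d)^4)
        (max ((rr s (d^2))^2) (rr (t^2*s-2*t^2*d+2*d^2) ((d^2)^2))) := by
  rw [show (rr t d)^4 = ((rr t d)^2)^2 by ring, rr_sq t d, rr_sq (t^2-2*d) (d^2),
    rr_sq s (d^2)]
  have h := key_ineq t d s
  rcases le_max_iff.mp h with h | h
  · exact le_max_of_le_left (rr_mono h)
  · rcases le_max_iff.mp h with h | h
    · exact le_max_of_le_right (le_max_of_le_left (rr_mono h))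
    · exact le_max_of_le_right (le_max_of_le_right (rr_mono h))

lemma ofReal_pow_rpow (y : ℝ) (hy : 0 ≤ y) (n : ℕ) (c : ℝ) :
    (ENNReal.ofReal (y^n)) ^ c = (ENNReal.ofReal y) ^ ((n : ℝ) * c) := by
  rw [ENNReal.ofReal_pow hy, ← ENNReal.rpow_natCast (ENNReal.ofReal y) n,
    ← ENNReal.rpow_mul]

/-- For arbitrary real 2×2 matrices `A`, `B`, the normalized
spectral radius of `AABABABB` is at most the maximum of the normalized spectral
radii of `AB`, `AABB` and `AABABBAB`. -/
theorem stmt_16 (A B : Matrix (Fin 2) (Fin 2) ℝ) :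
    rho (A * A * B * A * B * A * B * B) ^ ((1 : ℝ) / 8) ≤
      max (rho (A * B) ^ ((1 : ℝ) / 2))
        (max (rho (A * A * B * B) ^ ((1 : ℝ) / 4))
          (rho (A * A * B * A * B * B * A * B) ^ ((1 : ℝ) / 8))) := by
  set t := trace (A*B) with ht
  set d := det A * det B with hd
  set s := trace (A*A*B*B) with hs
  have htr1 : trace (A*A*B*A*B*A*B*B) = (t^2-d)*s - t^2*d := by
    rw [ht, hs, hd]
    simp only [Matrix.trace_fin_two, Matrix.mul_apply, Fin.sum_univ_two, Matrix.det_fin_two]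
    ring
  have htr2 : trace (A*A*B*A*B*B*A*B) = t^2*s - 2*t^2*d + 2*d^2 := by
    rw [ht, hs, hd]
    simp only [Matrix.trace_fin_two, Matrix.mul_apply, Fin.sum_univ_two, Matrix.det_fin_two]
    ring
  have hdet1 : det (A*A*B*A*B*A*B*B) = (d^2)^2 := by
    rw [hd]; simp only [det_mul]; ring
  have hdet2 : det (A*A*B*A*B*B*A*B) = (d^2)^2 := by
    rw [hd]; simp only [det_mul]; ring
  have hdetP : det (A*B) = d := by rw [hd]; simp only [det_mul]
  have hdetM : det (A*A*B*B) = d^2 := by rw [hd]; simp only [det_mul]; ring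
  rw [rho_eq_s16, rho_eq_s16, rho_eq_s16, rho_eq_s16, htr1, htr2, hdet1, hdet2, hdetP, hdetM]
  have hfs := final_scalar t d s
  rcases le_max_iff.mp hfs with hc | hc
  · refine le_max_of_le_left ?_
    calc (ENNReal.ofReal (rr ((t^2-d)*s - t^2*d) ((d^2)^2))) ^ ((1:ℝ)/8)
        ≤ (ENNReal.ofReal ((rr t d)^4)) ^ ((1:ℝ)/8) :=
          ENNReal.rpow_le_rpow (ENNReal.ofReal_le_ofReal hc) (by norm_num)
      _ = (ENNReal.ofReal (rr t d)) ^ ((1:ℝ)/2) := by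
          rw [ofReal_pow_rpow _ (rr_nonneg t d)]; norm_num
  · rcases le_max_iff.mp hc with hc | hc
    · refine le_max_of_le_right (le_max_of_le_left ?_)
      calc (ENNReal.ofReal (rr ((t^2-d)*s - t^2*d) ((d^2)^2))) ^ ((1:ℝ)/8)
          ≤ (ENNReal.ofReal ((rr s (d^2))^2)) ^ ((1:ℝ)/8) :=
            ENNReal.rpow_le_rpow (ENNReal.ofReal_le_ofReal hc) (by norm_num)
        _ = (ENNReal.ofReal (rr s (d^2))) ^ ((1:ℝ)/4) := by
            rw [ofReal_pow_rpow _ (rr_nonneg s (d^2))]; norm_num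
    · exact le_max_of_le_right (le_max_of_le_right
        (ENNReal.rpow_le_rpow (ENNReal.ofReal_le_ofReal hc) (by norm_num)))
end

section
/- For every choice of parameters R ∈ (0,1) and h₁, h₂ ∈ ℝ of a double rotation f, there is no orbit segment x₁, x₂, …, x₈ in [0,1) with x_{i+1} = f(x_i) for i = 1,…,7 such that x₁, x₃, x₅, x₆ ∈ [0,R) and x₂, x₄, x₇, x₈ ∈ [R,1). Equivalently, the binary word 12121122 cannot be produced by any double rotation. -/
/-- The double rotation with parameters `R`, `h₁`, `h₂`: rotate by `h₁` if
`x < R` and by `h₂` otherwise, where `Int.fract` is the fractional part. -/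
noncomputable def doubleRotation (R h₁ h₂ : ℝ) (x : ℝ) : ℝ :=
  if x < R then Int.fract (x + h₁) else Int.fract (x + h₂)

private lemma fract_step (h x : ℝ) (hx0 : 0 ≤ x) (hx1 : x < 1) :
    Int.fract (x + h) = x + Int.fract h ∨ Int.fract (x + h) = x + Int.fract h - 1 := by
  have hrw : x + h = (x + Int.fract h) + (⌊h⌋ : ℝ) := by
    unfold Int.fract; ring
  rw [hrw, Int.fract_add_intCast]
  have hf0 : 0 ≤ Int.fract h := Int.fract_nonneg h
  have hf1 : Int.fract h < 1 := Int.fract_lt_one h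
  rcases lt_or_ge (x + Int.fract h) 1 with hc | hc
  · left; exact Int.fract_eq_self.mpr ⟨by linarith, hc⟩
  · right
    have h2 : Int.fract (x + Int.fract h) = Int.fract ((x + Int.fract h) - ((1 : ℤ) : ℝ)) :=
      (Int.fract_sub_intCast _ 1).symm
    rw [h2]
    push_cast
    rw [Int.fract_eq_self.mpr ⟨by linarith, by linarith⟩]

/-- No double rotation has an orbit segment `x₁, …, x₈` in
`[0,1)` with `x₁, x₃, x₅, x₆ ∈ [0,R)` and `x₂, x₄, x₇, x₈ ∈ [R,1)`; i.e. the
binary word `12121122` cannot be produced by any double rotation. -/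
theorem stmt_17 (R h₁ h₂ : ℝ) (hR0 : 0 < R) (hR1 : R < 1) :
    ¬ ∃ x : Fin 8 → ℝ,
        (∀ i, x i ∈ Set.Ico (0 : ℝ) 1) ∧
        (∀ i : Fin 7, x i.succ = doubleRotation R h₁ h₂ (x i.castSucc)) ∧
        x 0 ∈ Set.Ico 0 R ∧ x 2 ∈ Set.Ico 0 R ∧ x 4 ∈ Set.Ico 0 R ∧
        x 5 ∈ Set.Ico 0 R ∧
        x 1 ∈ Set.Ico R 1 ∧ x 3 ∈ Set.Ico R 1 ∧ x 6 ∈ Set.Ico R 1 ∧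
        x 7 ∈ Set.Ico R 1 := by
  rintro ⟨x, hmem, hstep, m0, m2, m4, m5, m1, m3, m6, m7⟩
  obtain ⟨l0, r0⟩ := m0
  obtain ⟨l1, r1⟩ := m1
  obtain ⟨l2, r2⟩ := m2
  obtain ⟨l3, r3⟩ := m3
  obtain ⟨l4, r4⟩ := m4
  obtain ⟨l5, r5⟩ := m5
  obtain ⟨l6, r6⟩ := m6
  obtain ⟨l7, r7⟩ := m7
  have hA0 : 0 ≤ Int.fract h₁ := Int.fract_nonneg h₁
  have hA1 : Int.fract h₁ < 1 := Int.fract_lt_one h₁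
  have hB0 : 0 ≤ Int.fract h₂ := Int.fract_nonneg h₂
  have hB1 : Int.fract h₂ < 1 := Int.fract_lt_one h₂
  have b0 := hmem 0
  have b1 := hmem 1
  have b2 := hmem 2
  have b3 := hmem 3
  have b4 := hmem 4
  have b5 := hmem 5
  have b6 := hmem 6
  -- step equations
  have E0 : x 1 = Int.fract (x 0 + h₁) := by
    have h := hstep 0
    rw [show ((0 : Fin 7).succ) = (1 : Fin 8) by decide,
        show ((0 : Fin 7).castSucc) = (0 : Fin 8) by decide] at h
    rw [h, doubleRotation, if_pos r0]
  have E1 : x 2 = Int.fract (x 1 + h₂) := by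
    have h := hstep 1
    rw [show ((1 : Fin 7).succ) = (2 : Fin 8) by decide,
        show ((1 : Fin 7).castSucc) = (1 : Fin 8) by decide] at h
    rw [h, doubleRotation, if_neg (not_lt.mpr l1)]
  have E2 : x 3 = Int.fract (x 2 + h₁) := by
    have h := hstep 2
    rw [show ((2 : Fin 7).succ) = (3 : Fin 8) by decide,
        show ((2 : Fin 7).castSucc) = (2 : Fin 8) by decide] at h
    rw [h, doubleRotation, if_pos r2]
  have E3 : x 4 = Int.fract (x 3 + h₂) := by
    have h := hstep 3
    rw [show ((3 : Fin 7).succ) = (4 : Fin 8) by decide,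
        show ((3 : Fin 7).castSucc) = (3 : Fin 8) by decide] at h
    rw [h, doubleRotation, if_neg (not_lt.mpr l3)]
  have E4 : x 5 = Int.fract (x 4 + h₁) := by
    have h := hstep 4
    rw [show ((4 : Fin 7).succ) = (5 : Fin 8) by decide,
        show ((4 : Fin 7).castSucc) = (4 : Fin 8) by decide] at h
    rw [h, doubleRotation, if_pos r4]
  have E5 : x 6 = Int.fract (x 5 + h₁) := by
    have h := hstep 5
    rw [show ((5 : Fin 7).succ) = (6 : Fin 8) by decide,
        show ((5 : Fin 7).castSucc) = (5 : Fin 8) by decide] at h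
    rw [h, doubleRotation, if_pos r5]
  have E6 : x 7 = Int.fract (x 6 + h₂) := by
    have h := hstep 6
    rw [show ((6 : Fin 7).succ) = (7 : Fin 8) by decide,
        show ((6 : Fin 7).castSucc) = (6 : Fin 8) by decide] at h
    rw [h, doubleRotation, if_neg (not_lt.mpr l6)]
  have F0 : x 1 = x 0 + Int.fract h₁ ∨ x 1 = x 0 + Int.fract h₁ - 1 := by
    rw [E0]; exact fract_step h₁ (x 0) b0.1 b0.2
  have F1 : x 2 = x 1 + Int.fract h₂ ∨ x 2 = x 1 + Int.fract h₂ - 1 := by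
    rw [E1]; exact fract_step h₂ (x 1) b1.1 b1.2
  have F2 : x 3 = x 2 + Int.fract h₁ ∨ x 3 = x 2 + Int.fract h₁ - 1 := by
    rw [E2]; exact fract_step h₁ (x 2) b2.1 b2.2
  have F3 : x 4 = x 3 + Int.fract h₂ ∨ x 4 = x 3 + Int.fract h₂ - 1 := by
    rw [E3]; exact fract_step h₂ (x 3) b3.1 b3.2
  have F4 : x 5 = x 4 + Int.fract h₁ ∨ x 5 = x 4 + Int.fract h₁ - 1 := by
    rw [E4]; exact fract_step h₁ (x 4) b4.1 b4.2
  have F5 : x 6 = x 5 + Int.fract h₁ ∨ x 6 = x 5 + Int.fract h₁ - 1 := by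
    rw [E5]; exact fract_step h₁ (x 5) b5.1 b5.2
  have F6 : x 7 = x 6 + Int.fract h₂ ∨ x 7 = x 6 + Int.fract h₂ - 1 := by
    rw [E6]; exact fract_step h₂ (x 6) b6.1 b6.2
  rcases F0 with f0 | f0 <;> rcases F1 with f1 | f1 <;> rcases F2 with f2 | f2 <;>
    rcases F3 with f3 | f3 <;> rcases F4 with f4 | f4 <;> rcases F5 with f5 | f5 <;>
    rcases F6 with f6 | f6 <;> linarith
end

section
/- For every choice of parameters R ∈ (0,1) and h₁, h₂ ∈ ℝ of a double rotation f, there is no orbit segment x₁, x₂, …, x₈ in [0,1) with x_{i+1} = f(x_i) for i = 1,…,7 such that x₂, x₄, x₇, x₈ ∈ [0,R) and x₁, x₃, x₅, x₆ ∈ [R,1). Equivalently, the binary word 21212211 cannot be produced by any double rotation. -/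
/-- No double rotation has an orbit segment `x₁, …, x₈` in
`[0,1)` with `x₂, x₄, x₇, x₈ ∈ [0,R)` and `x₁, x₃, x₅, x₆ ∈ [R,1)`; i.e. the
binary word `21212211` cannot be produced by any double rotation. -/
theorem stmt_18 (R h₁ h₂ : ℝ) (hR0 : 0 < R) (hR1 : R < 1) :
    ¬ ∃ x : Fin 8 → ℝ,
        (∀ i, x i ∈ Set.Ico (0 : ℝ) 1) ∧
        (∀ i : Fin 7, x i.succ = doubleRotation R h₁ h₂ (x i.castSucc)) ∧
        x 1 ∈ Set.Ico 0 R ∧ x 3 ∈ Set.Ico 0 R ∧ x 6 ∈ Set.Ico 0 R ∧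
        x 7 ∈ Set.Ico 0 R ∧
        x 0 ∈ Set.Ico R 1 ∧ x 2 ∈ Set.Ico R 1 ∧ x 4 ∈ Set.Ico R 1 ∧
        x 5 ∈ Set.Ico R 1 := by
  rintro ⟨x, hmem, hstep, h1m, h3m, h6m, h7m, h0m, h2m, h4m, h5m⟩
  obtain ⟨h10, h1R⟩ := h1m
  obtain ⟨h30, h3R⟩ := h3m
  obtain ⟨h60, h6R⟩ := h6m
  obtain ⟨h70, h7R⟩ := h7m
  obtain ⟨h0R, h01⟩ := h0m
  obtain ⟨h2R, h21⟩ := h2m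
  obtain ⟨h4R, h41⟩ := h4m
  obtain ⟨h5R, h51⟩ := h5m
  have e0 : x 1 = doubleRotation R h₁ h₂ (x 0) := hstep 0
  have e1 : x 2 = doubleRotation R h₁ h₂ (x 1) := hstep 1
  have e2 : x 3 = doubleRotation R h₁ h₂ (x 2) := hstep 2
  have e3 : x 4 = doubleRotation R h₁ h₂ (x 3) := hstep 3
  have e4 : x 5 = doubleRotation R h₁ h₂ (x 4) := hstep 4
  have e5 : x 6 = doubleRotation R h₁ h₂ (x 5) := hstep 5
  have e6 : x 7 = doubleRotation R h₁ h₂ (x 6) := hstep 6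
  rw [doubleRotation, if_neg (not_lt.2 h0R), Int.fract] at e0
  rw [doubleRotation, if_pos h1R, Int.fract] at e1
  rw [doubleRotation, if_neg (not_lt.2 h2R), Int.fract] at e2
  rw [doubleRotation, if_pos h3R, Int.fract] at e3
  rw [doubleRotation, if_neg (not_lt.2 h4R), Int.fract] at e4
  rw [doubleRotation, if_neg (not_lt.2 h5R), Int.fract] at e5
  rw [doubleRotation, if_pos h6R, Int.fract] at e6
  set n0 : ℤ := ⌊x 0 + h₂⌋ with hn0
  set n1 : ℤ := ⌊x 1 + h₁⌋ with hn1
  set n2 : ℤ := ⌊x 2 + h₂⌋ with hn2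
  set n3 : ℤ := ⌊x 3 + h₁⌋ with hn3
  set n4 : ℤ := ⌊x 4 + h₂⌋ with hn4
  set n5 : ℤ := ⌊x 5 + h₂⌋ with hn5
  set n6 : ℤ := ⌊x 6 + h₁⌋ with hn6
  -- n3 = n1
  have k1 : n3 = n1 := by
    have hlt : ((n3 - n1 : ℤ) : ℝ) < 1 := by push_cast; linarith
    have hgt : (-1 : ℝ) < ((n3 - n1 : ℤ) : ℝ) := by push_cast; linarith
    have hlt' : n3 - n1 < 1 := by exact_mod_cast hlt
    have hgt' : -1 < n3 - n1 := by exact_mod_cast hgt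
    omega
  have k2 : n2 = n0 := by
    have hlt : ((n2 - n0 : ℤ) : ℝ) < 1 := by push_cast; linarith
    have hgt : (-1 : ℝ) < ((n2 - n0 : ℤ) : ℝ) := by push_cast; linarith
    have hlt' : n2 - n0 < 1 := by exact_mod_cast hlt
    have hgt' : -1 < n2 - n0 := by exact_mod_cast hgt
    omega
  have k3 : n5 = n0 := by
    have hlt : ((n5 - n0 : ℤ) : ℝ) < 1 := by push_cast; linarith
    have hgt : (-1 : ℝ) < ((n5 - n0 : ℤ) : ℝ) := by push_cast; linarith
    have hlt' : n5 - n0 < 1 := by exact_mod_cast hlt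
    have hgt' : -1 < n5 - n0 := by exact_mod_cast hgt
    omega
  have k4 : n4 = n0 ∨ n4 = n0 - 1 := by
    have hlt : ((n4 - n0 : ℤ) : ℝ) < 1 := by push_cast; linarith
    have hgt : (-2 : ℝ) < ((n4 - n0 : ℤ) : ℝ) := by push_cast; linarith
    have hlt' : n4 - n0 < 1 := by exact_mod_cast hlt
    have hgt' : -2 < n4 - n0 := by exact_mod_cast hgt
    omega
  have k5 : n6 = n1 ∨ n6 = n1 + 1 := by
    have hlt : ((n6 - n1 : ℤ) : ℝ) < 2 := by push_cast; linarith
    have hgt : (-1 : ℝ) < ((n6 - n1 : ℤ) : ℝ) := by push_cast; linarith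
    have hlt' : n6 - n1 < 2 := by exact_mod_cast hlt
    have hgt' : -1 < n6 - n1 := by exact_mod_cast hgt
    omega
  rw [k1] at e3
  rw [k2] at e2
  rw [k3] at e5
  rcases k4 with k4 | k4 <;> rw [k4] at e4 <;>
    rcases k5 with k5 | k5 <;> rw [k5] at e6 <;>
      push_cast at e0 e1 e2 e3 e4 e5 e6 <;> linarith
end
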